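/- (Lower-level equivalence) Let v, w ∈ A_i (i.e., all edges incident to v and to w lie in E_{<i}), and let E', F' ⊆ E_{<i}. Suppose: (a) for every u ∈ W_i ∪ {S} and x ∈ W_i, u reaches x in (V,E') iff u reaches x in (V,F'); (b) for every u ∈ W_i ∪ {S}, u reaches v in (V,E') iff u reaches w in (V,F'). Then for every H ⊆ E_{≥i}, S reaches v in (V, E'∪H) if and only if S reaches w in (V, F'∪H). -/

import Mathlib

open scoped Classical
open Finset

noncomputable section

/-- `inc src tgt e x` : edge `e` is incident to vertex `x`. -/
def inc {V : Type*} (src tgt : ℕ → V) (e : ℕ) (x : V) : Prop := src e = x ∨ tgt e = x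

/-- Reachability in the subgraph with edge set `A`. -/
def Reach {V : Type*} (src tgt : ℕ → V) (A : Finset ℕ) (x y : V) : Prop :=
  Relation.ReflTransGen (fun a b => ∃ e ∈ A, src e = a ∧ tgt e = b) x y

/-- `v` is reachable from some vertex of `S` in the subgraph with edge set `A`. -/
def SReach {V : Type*} (src tgt : ℕ → V) (A : Finset ℕ) (S : Finset V) (v : V) : Prop :=
  ∃ s ∈ S, Reach src tgt A s v

/-- Probability that exactly the edges in `X` (among `e_0,…,e_{m-1}`) are present. -/
def prW (p : ℕ → ℝ) (m : ℕ) (X : Finset ℕ) : ℝ :=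
  (∏ e ∈ X, p e) * ∏ e ∈ Finset.range m \ X, (1 - p e)

/-- Probability that `v` is reachable from the seed set `S`. -/
def probReach {V : Type*} (src tgt : ℕ → V) (p : ℕ → ℝ) (m : ℕ) (S : Finset V) (v : V) : ℝ :=
  ∑ X ∈ (Finset.range m).powerset, if SReach src tgt X S v then prW p m X else 0

/-- Conditional probability of `event` given that all edges in `A` are present and
all edges in `B` are absent. -/
def condP (p : ℕ → ℝ) (m : ℕ) (A B : Finset ℕ) (event : Finset ℕ → Prop) : ℝ :=
  (∑ X ∈ (Finset.range m).powerset,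
      if A ⊆ X ∧ X ∩ B = ∅ ∧ event X then prW p m X else 0) /
  (∑ X ∈ (Finset.range m).powerset, if A ⊆ X ∧ X ∩ B = ∅ then prW p m X else 0)

/-- The frontier `W_i`: vertices incident both to an edge of `E_{<i}` and to an edge of
`E_{≥ i}` (as a set). -/
def frontSet {V : Type*} (src tgt : ℕ → V) (m i : ℕ) : Set V :=
  {x | (∃ e ∈ Finset.range i, inc src tgt e x) ∧
       ∃ e ∈ Finset.range m \ Finset.range i, inc src tgt e x}

/-- The frontier `W_i` as a finset. -/
def front {V : Type*} [Fintype V] (src tgt : ℕ → V) (m i : ℕ) : Finset V :=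
  Finset.univ.filter fun x =>
    (∃ e ∈ Finset.range i, inc src tgt e x) ∧
    ∃ e ∈ Finset.range m \ Finset.range i, inc src tgt e x

/-- The shared transversal configuration `Ψ_i(A)`: the set of frontier vertices reachable
from `S`, together with the reachability relation among unreached frontier vertices. -/
def Psi {V : Type*} [Fintype V] (src tgt : ℕ → V) (m : ℕ) (S : Finset V) (i : ℕ)
    (A : Finset ℕ) : Finset V × Finset (V × V) :=
  ((front src tgt m i).filter fun x => SReach src tgt A S x,
   ((front src tgt m i) ×ˢ (front src tgt m i)).filter fun q =>
     ¬ SReach src tgt A S q.1 ∧ Reach src tgt A q.1 q.2)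

/-- The transversal configuration `Φ_i^v(A)`: the sets `W_i^{S⇝}`, `W_i^{⇝v}`, the
reachability matrix on the remaining rows/columns (with extra column `v`), and the
entry `Φ_{S,v}`. -/
def Phi {V : Type*} [Fintype V] (src tgt : ℕ → V) (m : ℕ) (S : Finset V) (i : ℕ) (v : V)
    (A : Finset ℕ) : Finset V × Finset V × Finset (V × V) × Prop :=
  ((front src tgt m i).filter fun x => SReach src tgt A S x,
   (front src tgt m i).filter fun x => Reach src tgt A x v,
   (((front src tgt m i) ∪ {v}) ×ˢ ((front src tgt m i) ∪ {v})).filter fun q =>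
     (q.1 ∈ front src tgt m i ∧ ¬ SReach src tgt A S q.1) ∧
     (q.2 = v ∨ (q.2 ∈ front src tgt m i ∧ ¬ Reach src tgt A q.2 v)) ∧
     Reach src tgt A q.1 q.2,
   SReach src tgt A S v)

/-- Probability that the shared transversal configuration `Ψ` appears at level `i`. -/
def PrPsi {V : Type*} [Fintype V] (src tgt : ℕ → V) (p : ℕ → ℝ) (m : ℕ) (S : Finset V)
    (i : ℕ) (Ψ : Finset V × Finset (V × V)) : ℝ :=
  ∑ A ∈ (Finset.range i).powerset,
    if Psi src tgt m S i A = Ψ then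
      (∏ e ∈ A, p e) * ∏ e ∈ Finset.range i \ A, (1 - p e)
    else 0

/-- `IsWalk src tgt A x y es`: `es` is a directed walk from `x` to `y` using edges in `A`. -/
def IsWalk {V : Type*} (src tgt : ℕ → V) (A : Finset ℕ) : V → V → List ℕ → Prop
  | x, y, [] => x = y
  | x, y, e :: es => e ∈ A ∧ src e = x ∧ IsWalk src tgt A (tgt e) y es


section Aux

variable {V : Type*} (src tgt : ℕ → V)

lemma reach_mono {A B : Finset ℕ} (hAB : A ⊆ B) {x y : V}
    (h : Reach src tgt A x y) : Reach src tgt B x y :=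
  Relation.ReflTransGen.mono (show ∀ a b, (∃ e ∈ A, src e = a ∧ tgt e = b) → ∃ e ∈ B, src e = a ∧ tgt e = b from
    fun a b ⟨e, he, h1, h2⟩ => ⟨e, hAB he, h1, h2⟩) x y h

lemma isWalk_append {A : Finset ℕ} (es₁ es₂ : List ℕ) (x y : V) :
    IsWalk src tgt A x y (es₁ ++ es₂) ↔
      ∃ z, IsWalk src tgt A x z es₁ ∧ IsWalk src tgt A z y es₂ := by
  induction es₁ generalizing x with
  | nil =>
    simp only [List.nil_append, IsWalk]
    constructor
    · intro h; exact ⟨x, rfl, h⟩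
    · rintro ⟨z, rfl, h⟩; exact h
  | cons e t ih =>
    simp only [List.cons_append, IsWalk, List.append_eq, ih]
    tauto

lemma isWalk_edges_mem {A : Finset ℕ} :
    ∀ {es : List ℕ} {x y : V}, IsWalk src tgt A x y es → ∀ e ∈ es, e ∈ A := by
  intro es
  induction es with
  | nil => intro x y _ e he; simp at he
  | cons f t ih =>
    intro x y h e he
    obtain ⟨hf, _, hw⟩ := h
    rcases List.mem_cons.mp he with rfl | he
    · exact hf
    · exact ih hw e he

lemma isWalk_subset {A B : Finset ℕ} :
    ∀ {es : List ℕ} {x y : V}, IsWalk src tgt A x y es → (∀ e ∈ es, e ∈ B) →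
      IsWalk src tgt B x y es := by
  intro es
  induction es with
  | nil => intro x y h _; exact h
  | cons f t ih =>
    intro x y ⟨hf, hs, hw⟩ hmem
    exact ⟨hmem f List.mem_cons_self, hs,
      ih hw fun e he => hmem e (List.mem_cons_of_mem _ he)⟩

lemma isWalk_reach {A : Finset ℕ} :
    ∀ {es : List ℕ} {x y : V}, IsWalk src tgt A x y es → Reach src tgt A x y := by
  intro es
  induction es with
  | nil =>
    intro x y h
    have hxy : x = y := h
    subst hxy
    exact Relation.ReflTransGen.refl
  | cons f t ih =>
    intro x y ⟨hf, hs, hw⟩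
    exact Relation.ReflTransGen.head ⟨f, hf, hs, rfl⟩ (ih hw)

lemma reach_walk {A : Finset ℕ} {x y : V} (h : Reach src tgt A x y) :
    ∃ es, IsWalk src tgt A x y es := by
  induction h using Relation.ReflTransGen.head_induction_on with
  | refl => exact ⟨[], rfl⟩
  | head hab _ ih =>
    obtain ⟨e, he, h1, h2⟩ := hab
    obtain ⟨es, hes⟩ := ih
    exact ⟨e :: es, he, h1, h2 ▸ hes⟩

lemma exists_last_split (P : ℕ → Prop) :
    ∀ es : List ℕ, (∃ e ∈ es, P e) →
      ∃ l₁ e l₂, es = l₁ ++ e :: l₂ ∧ P e ∧ ∀ f ∈ l₂, ¬ P f := by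
  intro es
  induction es with
  | nil => rintro ⟨e, he, _⟩; simp at he
  | cons a t ih =>
    intro hex
    by_cases ht : ∃ e ∈ t, P e
    · obtain ⟨l₁, e, l₂, rfl, hPe, hl₂⟩ := ih ht
      exact ⟨a :: l₁, e, l₂, rfl, hPe, hl₂⟩
    · push_neg at ht
      have hPa : P a := by
        obtain ⟨e, he, hPe⟩ := hex
        rcases List.mem_cons.mp he with rfl | he
        · exact hPe
        · exact absurd hPe (ht e he)
      exact ⟨[], a, t, rfl, hPa, ht⟩

lemma key (m i : ℕ) (S : Finset V) (E' F' H : Finset ℕ)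
    (hE' : E' ⊆ Finset.range i)
    (hH : H ⊆ Finset.range m \ Finset.range i)
    (ha1 : ∀ u ∈ frontSet src tgt m i, ∀ x ∈ frontSet src tgt m i,
      Reach src tgt E' u x → Reach src tgt F' u x)
    (ha2 : ∀ x ∈ frontSet src tgt m i,
      SReach src tgt E' S x → SReach src tgt F' S x) :
    ∀ n : ℕ, ∀ x x' : V,
      (∀ u ∈ frontSet src tgt m i, Reach src tgt E' u x → Reach src tgt F' u x') →
      (SReach src tgt E' S x → SReach src tgt F' S x') →
      (x ∈ frontSet src tgt m i ∨ ∀ e ∈ H, ¬ inc src tgt e x) →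
      ∀ s ∈ S, ∀ es : List ℕ, es.length = n →
        IsWalk src tgt (E' ∪ H) s x es → SReach src tgt (F' ∪ H) S x' := by
  intro n
  induction n using Nat.strong_induction_on with
  | _ n IH =>
  intro x x' hx hSx hside s hs es hlen hwalk
  by_cases hcase : ∃ e ∈ es, e ∈ H
  case neg =>
    -- walk lies entirely in E'
    have hmem : ∀ e ∈ es, e ∈ E' := by
      intro e he
      push_neg at hcase
      rcases Finset.mem_union.mp (isWalk_edges_mem src tgt hwalk e he) with h | h
      · exact h
      · exact absurd h (hcase e he)
    have hreach : Reach src tgt E' s x := isWalk_reach src tgt (isWalk_subset src tgt hwalk hmem)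
    obtain ⟨s₀, hs₀, hr⟩ := hSx ⟨s, hs, hreach⟩
    exact ⟨s₀, hs₀, reach_mono src tgt Finset.subset_union_left hr⟩
  case pos =>
    obtain ⟨es₁, e, es₂, rfl, heH, hes₂⟩ := exists_last_split (· ∈ H) _ hcase
    obtain ⟨z, hw1, heE, hesrc, hw2⟩ := (isWalk_append src tgt es₁ (e :: es₂) s x).mp hwalk
    set y := tgt e with hy
    -- the tail es₂ lies in E'
    have hes₂E' : ∀ f ∈ es₂, f ∈ E' := by
      intro f hf
      rcases Finset.mem_union.mp (isWalk_edges_mem src tgt hw2 f hf) with h | h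
      · exact h
      · exact absurd h (hes₂ f hf)
    have hw2E' : IsWalk src tgt E' y x es₂ := isWalk_subset src tgt hw2 hes₂E'
    have hreach_yx : Reach src tgt E' y x := isWalk_reach src tgt hw2E'
    -- y is in the frontier
    have hyW : y ∈ frontSet src tgt m i := by
      refine ⟨?_, ⟨e, hH heH, Or.inr rfl⟩⟩
      cases es₂ with
      | nil =>
        have hyx : y = x := hw2E'
        rcases hside with hxW | hnoH
        · rw [hyx]; exact hxW.1
        · exact absurd (Or.inr hyx : inc src tgt e x) (hnoH e heH)
      | cons f t =>
        obtain ⟨hf, hsf, _⟩ := hw2E'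
        exact ⟨f, hE' hf, Or.inl hsf⟩
    -- S reaches y in F' ∪ H
    have hSy : SReach src tgt (F' ∪ H) S y := by
      have hwl : IsWalk src tgt (E' ∪ H) s y (es₁ ++ [e]) :=
        (isWalk_append src tgt es₁ [e] s y).mpr ⟨z, hw1, heE, hesrc, rfl⟩
      by_cases hall : ∀ f ∈ es₁ ++ [e], f ∈ H
      · have : IsWalk src tgt H s y (es₁ ++ [e]) := isWalk_subset src tgt hwl hall
        exact ⟨s, hs, reach_mono src tgt Finset.subset_union_right
          (isWalk_reach src tgt this)⟩
      · push_neg at hall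
        obtain ⟨l₁, f, l₂, heq, hfH, hl₂⟩ := exists_last_split (· ∉ H) _ (by
          obtain ⟨g, hg, hgH⟩ := hall; exact ⟨g, hg, hgH⟩)
        have hl₂H : ∀ g ∈ l₂, g ∈ H := fun g hg => not_not.mp (hl₂ g hg)
        obtain ⟨z₂, hwl₁, hfE, hfsrc, hwl₂⟩ :=
          (isWalk_append src tgt l₁ (f :: l₂) s y).mp (heq ▸ hwl)
        have hfE' : f ∈ E' := by
          rcases Finset.mem_union.mp hfE with h | h
          · exact h
          · exact absurd h hfH
        set u' := tgt f with hu'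
        -- l₂ is nonempty (its last element is e ∈ H, while f ∉ H)
        have hl₂ne : l₂ ≠ [] := by
          rintro rfl
          have : (l₁ ++ [f]).getLast? = (es₁ ++ [e]).getLast? := by rw [← heq]
          rw [List.getLast?_concat, List.getLast?_concat] at this
          exact hfH (Option.some_injective _ this ▸ heH)
        obtain ⟨g, t, rfl⟩ := List.exists_cons_of_ne_nil hl₂ne
        have hgsrc : src g = u' := hwl₂.2.1
        have hu'W : u' ∈ frontSet src tgt m i :=
          ⟨⟨f, hE' hfE', Or.inr rfl⟩, ⟨g, hH (hl₂H g List.mem_cons_self), Or.inl hgsrc⟩⟩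
        -- apply the inductive hypothesis to the shorter walk s → u'
        have hlt : (l₁ ++ [f]).length < n := by
          have h1 : (l₁ ++ f :: g :: t).length = (es₁ ++ [e]).length := by rw [heq]
          have h2 := hlen
          simp only [List.length_append, List.length_cons, List.length_nil] at h1 h2 ⊢
          omega
        have hSu' : SReach src tgt (F' ∪ H) S u' :=
          IH _ hlt u' u' (fun u hu => ha1 u hu u' hu'W) (ha2 u' hu'W) (Or.inl hu'W)
            s hs (l₁ ++ [f]) rfl
            ((isWalk_append src tgt l₁ [f] s u').mpr ⟨z₂, hwl₁, hfE, hfsrc, rfl⟩)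
        -- u' reaches y through H
        have hwH : IsWalk src tgt H u' y (g :: t) :=
          isWalk_subset src tgt hwl₂ hl₂H
        obtain ⟨s₀, hs₀, hr⟩ := hSu'
        exact ⟨s₀, hs₀, hr.trans (reach_mono src tgt Finset.subset_union_right
          (isWalk_reach src tgt hwH))⟩
    obtain ⟨s₀, hs₀, hr⟩ := hSy
    exact ⟨s₀, hs₀, hr.trans (reach_mono src tgt Finset.subset_union_left
      (hx y hyW hreach_yx))⟩

end Aux

/-- Lower-level equivalence: if all edges incident to `v` and `w` lie in `E_{<i}` and
`E', F' ⊆ E_{<i}` induce identical reachability among the frontier (and from `S`), with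
the column of `v` under `E'` matching the column of `w` under `F'`, then for every
`H ⊆ E_{≥i}`, `S ⇝ v` in `(V, E' ∪ H)` iff `S ⇝ w` in `(V, F' ∪ H)`. -/
theorem stmt4 {V : Type*} (src tgt : ℕ → V) (m i : ℕ) (him : i ≤ m)
    (S : Finset V) (v w : V) (E' F' : Finset ℕ)
    (hE' : E' ⊆ Finset.range i) (hF' : F' ⊆ Finset.range i)
    (hvA : ∀ e ∈ Finset.range m, inc src tgt e v → e ∈ Finset.range i)
    (hwA : ∀ e ∈ Finset.range m, inc src tgt e w → e ∈ Finset.range i)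
    (ha1 : ∀ u ∈ frontSet src tgt m i, ∀ x ∈ frontSet src tgt m i,
      (Reach src tgt E' u x ↔ Reach src tgt F' u x))
    (ha2 : ∀ x ∈ frontSet src tgt m i,
      (SReach src tgt E' S x ↔ SReach src tgt F' S x))
    (hb1 : ∀ u ∈ frontSet src tgt m i,
      (Reach src tgt E' u v ↔ Reach src tgt F' u w))
    (hb2 : SReach src tgt E' S v ↔ SReach src tgt F' S w) :
    ∀ H ⊆ Finset.range m \ Finset.range i,
      (SReach src tgt (E' ∪ H) S v ↔ SReach src tgt (F' ∪ H) S w) := by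
  intro H hH
  have hnoHv : ∀ e ∈ H, ¬ inc src tgt e v := by
    intro e he hinc
    have hm := Finset.mem_sdiff.mp (hH he)
    exact hm.2 (hvA e hm.1 hinc)
  have hnoHw : ∀ e ∈ H, ¬ inc src tgt e w := by
    intro e he hinc
    have hm := Finset.mem_sdiff.mp (hH he)
    exact hm.2 (hwA e hm.1 hinc)
  constructor
  · rintro ⟨s, hs, hr⟩
    obtain ⟨es, hw'⟩ := reach_walk src tgt hr
    exact key src tgt m i S E' F' H hE' hH
      (fun u hu x hx => (ha1 u hu x hx).mp) (fun x hx => (ha2 x hx).mp)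
      es.length v w (fun u hu => (hb1 u hu).mp) hb2.mp (Or.inr hnoHv)
      s hs es rfl hw'
  · rintro ⟨s, hs, hr⟩
    obtain ⟨es, hw'⟩ := reach_walk src tgt hr
    exact key src tgt m i S F' E' H hF' hH
      (fun u hu x hx => (ha1 u hu x hx).mpr) (fun x hx => (ha2 x hx).mpr)
      es.length w v (fun u hu => (hb1 u hu).mpr) hb2.mpr (Or.inr hnoHw)
      s hs es rfl hw'

end
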